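/- The Robertson–Schrödinger uncertainty relation implies positive-definiteness of the covariance matrix: Let N be a positive natural number and let σ be a real symmetric 2N×2N matrix such that the complex matrix σ + i·Ω (which is Hermitian, since Ω is real antisymmetric) is positive semidefinite. Then σ is positive definite, i.e., uᵀσu > 0 for every nonzero u ∈ ℝ^{2N}. -/

import Mathlib

open Matrix Kronecker ComplexOrder

/-- The standard symplectic form `Ω = ⊕_{j=1}^N Ω₁` on `ℝ^{2N}`, with the
`2N` coordinates indexed by `Fin N × Fin 2` (mode index, quadrature index). -/
noncomputable def Omega (N : ℕ) : Matrix (Fin N × Fin 2) (Fin N × Fin 2) ℝ :=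
  (1 : Matrix (Fin N) (Fin N) ℝ) ⊗ₖ !![0, 1; -1, 0]

lemma Omega_transpose (N : ℕ) : (Omega N)ᵀ = -(Omega N) := by
  unfold Omega
  rw [show ((1 : Matrix (Fin N) (Fin N) ℝ) ⊗ₖ !![(0:ℝ), 1; -1, 0])ᵀ =
      (1 : Matrix (Fin N) (Fin N) ℝ)ᵀ ⊗ₖ !![(0:ℝ), 1; -1, 0]ᵀ from
    (Matrix.kroneckerMap_transpose _ _ _).symm]
  rw [Matrix.transpose_one]
  have h : !![(0:ℝ), 1; -1, 0]ᵀ = (-1 : ℝ) • (!![(0:ℝ), 1; -1, 0]) := by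
    ext i j; fin_cases i <;> fin_cases j <;> simp
  rw [h, Matrix.kronecker_smul, neg_one_smul]

lemma Omega_T_mul (N : ℕ) : (Omega N)ᵀ * Omega N = 1 := by
  rw [Omega_transpose, Matrix.neg_mul]
  unfold Omega
  rw [← Matrix.mul_kronecker_mul, Matrix.one_mul]
  have h : !![(0:ℝ), 1; -1, 0] * !![(0:ℝ), 1; -1, 0] = (-1 : ℝ) • (1 : Matrix (Fin 2) (Fin 2) ℝ) := by
    ext i j; fin_cases i <;> fin_cases j <;>
      simp [Matrix.mul_apply, Fin.sum_univ_two, Matrix.one_apply]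
  rw [h, Matrix.kronecker_smul, Matrix.one_kronecker_one, neg_smul, one_smul, neg_neg]

/-- complexified quadratic form of a real matrix. -/
lemma complex_dot {n : Type*} [Fintype n] (A : Matrix n n ℝ) (u : n → ℝ) :
    (fun i => (u i : ℂ)) ⬝ᵥ ((A.map Complex.ofReal) *ᵥ (fun i => (u i : ℂ)))
      = ((u ⬝ᵥ A *ᵥ u : ℝ) : ℂ) := by
  simp only [dotProduct, Matrix.mulVec, Matrix.map_apply]
  push_cast
  rfl

/-- complexified matrix-vector product of a real matrix, entrywise. -/
lemma complex_mulVec {n : Type*} [Fintype n] (A : Matrix n n ℝ) (u : n → ℝ) (i : n) :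
    ((A.map Complex.ofReal) *ᵥ (fun i => (u i : ℂ))) i = ((A *ᵥ u) i : ℂ) := by
  simp only [Matrix.mulVec, dotProduct, Matrix.map_apply]
  push_cast
  rfl

/-- **Robertson–Schrödinger implies positive-definiteness**: if `σ` is real
symmetric and the Hermitian matrix `σ + iΩ` is positive semidefinite, then
`σ` is positive definite: `uᵀσu > 0` for every nonzero real `u`. -/
theorem robertson_schrodinger_posDef (N : ℕ) (hN : 0 < N)
    (σ : Matrix (Fin N × Fin 2) (Fin N × Fin 2) ℝ) (hsymm : σᵀ = σ)
    (hRS : (σ.map (Complex.ofReal) +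
        Complex.I • (Omega N).map (Complex.ofReal)).PosSemidef) :
    ∀ u : (Fin N × Fin 2) → ℝ, u ≠ 0 → 0 < u ⬝ᵥ σ.mulVec u := by
  intro u hu
  set v : (Fin N × Fin 2) → ℂ := fun i => (u i : ℂ) with hv
  have hstar : star v = v := by
    funext i; simp [hv, Complex.conj_ofReal]
  set M := σ.map (Complex.ofReal) + Complex.I • (Omega N).map (Complex.ofReal) with hM
  -- u ⬝ Ω u = 0 by antisymmetry
  have hΩ0 : u ⬝ᵥ (Omega N) *ᵥ u = 0 := by
    have h1 : u ⬝ᵥ (Omega N) *ᵥ u = -(u ⬝ᵥ (Omega N) *ᵥ u) := by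
      conv_lhs => rw [Matrix.dotProduct_mulVec, ← Matrix.mulVec_transpose,
        Omega_transpose, Matrix.neg_mulVec, neg_dotProduct,
        dotProduct_comm]
    linarith
  have hkey : star v ⬝ᵥ M *ᵥ v = ((u ⬝ᵥ σ *ᵥ u : ℝ) : ℂ) := by
    rw [hstar, hM, Matrix.add_mulVec, Matrix.smul_mulVec,
      dotProduct_add, dotProduct_smul, hv, complex_dot, complex_dot, hΩ0]
    simp
  -- nonnegativity
  have hnn : (0 : ℝ) ≤ u ⬝ᵥ σ *ᵥ u := by
    have := hRS.dotProduct_mulVec_nonneg v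
    rw [hkey] at this
    exact Complex.zero_le_real.mp this
  rcases lt_or_eq_of_le hnn with h | h
  · exact h
  -- degenerate case: derive contradiction
  exfalso
  have hzero : star v ⬝ᵥ M *ᵥ v = 0 := by rw [hkey, ← h]; simp
  have hMv : M *ᵥ v = 0 := (hRS.dotProduct_mulVec_zero_iff v).mp hzero
  have hΩu : (Omega N) *ᵥ u = 0 := by
    funext i
    have hi : (M *ᵥ v) i = 0 := by rw [hMv]; rfl
    rw [hM, Matrix.add_mulVec, Matrix.smul_mulVec] at hi
    have h1 : ((σ *ᵥ u) i : ℂ) + Complex.I * (((Omega N) *ᵥ u) i : ℂ) = 0 := by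
      have e1 := complex_mulVec σ u i
      have e2 := complex_mulVec (Omega N) u i
      rw [← hv] at e1 e2
      simpa [e1, e2] using hi
    have := congrArg Complex.im h1
    simpa using this
  apply hu
  have h2 : (Omega N)ᵀ *ᵥ ((Omega N) *ᵥ u) = u := by
    rw [Matrix.mulVec_mulVec, Omega_T_mul, Matrix.one_mulVec]
  rw [hΩu, Matrix.mulVec_zero] at h2
  exact h2.symm
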